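/- arXiv:1212.1252 — 2 statements merged into one kernel-verified Lean document; each statement's English description precedes it below -/
import Mathlib

section
/- Let m ≥ 4 be an integer, α the largest real root of f_m(x) = x³ - m·x² - (m+1)·x - 1, and K_m = ℚ(α). Define ρ = -(1/D_m)·[(m³ + 5m² + 5m + 4) + (2m³ + 7m² + 7m + 9)·α - 2(m² + 3m + 3)·α²] ∈ K_m, where D_m = (m² + m - 3)² - 32. Then Tr_{K_m/ℚ}(ρ) = 0, Tr_{K_m/ℚ}(α·ρ) = 0, and Tr_{K_m/ℚ}(α²·ρ) = 1; that is, ρ is the third element of the dual basis of {1, α, α²} with respect to the trace form. -/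
open IntermediateField

open Polynomial in
lemma minpoly_eq_cubic_aux (m : ℤ) (hm : 4 ≤ m) (α : ℝ)
    (hroot : α ^ 3 - (m : ℝ) * α ^ 2 - ((m : ℝ) + 1) * α - 1 = 0) :
    minpoly ℚ α = X ^ 3 - C (m : ℚ) * X ^ 2 - C ((m : ℚ) + 1) * X - C 1 := by
  set pZ : ℤ[X] := X ^ 3 - C m * X ^ 2 - C (m + 1) * X - C 1 with hpZ
  have hmonicZ : pZ.Monic := by
    unfold pZ; monicity!
  have hdegZ : pZ.natDegree = 3 := by
    unfold pZ; compute_degree!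
  have hirrZ : Irreducible pZ := by
    rw [hmonicZ.irreducible_iff_roots_eq_zero_of_degree_le_three (by omega) (by omega)]
    rw [Multiset.eq_zero_iff_forall_notMem]
    intro r hr
    have h0 : pZ ≠ 0 := hmonicZ.ne_zero
    rw [mem_roots h0] at hr
    have he : r ^ 3 - m * r ^ 2 - (m + 1) * r - 1 = 0 := by
      simpa [hpZ, IsRoot, eval_pow] using hr
    have hunit : IsUnit r :=
      IsUnit.of_mul_eq_one (a := r) (r ^ 2 - m * r - (m + 1)) (by ring_nf; linarith [he])
    rcases Int.isUnit_iff.mp hunit with h | h <;> subst h <;> omega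
  have hmap : (X ^ 3 - C (m : ℚ) * X ^ 2 - C ((m : ℚ) + 1) * X - C 1 : ℚ[X])
      = pZ.map (Int.castRingHom ℚ) := by
    unfold pZ
    simp [Polynomial.map_sub, Polynomial.map_mul, Polynomial.map_pow]
  have hirr : Irreducible (X ^ 3 - C (m : ℚ) * X ^ 2 - C ((m : ℚ) + 1) * X - C 1 : ℚ[X]) := by
    rw [hmap]
    exact (hmonicZ.irreducible_iff_irreducible_map_fraction_map).mp hirrZ
  have hmonic : (X ^ 3 - C (m : ℚ) * X ^ 2 - C ((m : ℚ) + 1) * X - C 1 : ℚ[X]).Monic := by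
    monicity!
  have haev : aeval α (X ^ 3 - C (m : ℚ) * X ^ 2 - C ((m : ℚ) + 1) * X - C 1 : ℚ[X]) = 0 := by
    simp only [map_sub, map_mul, map_pow, aeval_X, aeval_C, map_one, map_intCast, map_add]
    linarith [hroot]
  exact (minpoly.eq_of_irreducible_of_monic hirr haev hmonic).symm

set_option maxHeartbeats 1600000 in
set_option synthInstance.maxHeartbeats 400000 in
/-- Let `m ≥ 4` be an integer, `α` the largest real root of
`f_m(x) = x³ - m·x² - (m+1)·x - 1`, `K_m = ℚ(α)` and `D_m = (m² + m - 3)² - 32`.  Set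
`ρ = -(1/D_m)·[(m³ + 5m² + 5m + 4) + (2m³ + 7m² + 7m + 9)·α - 2(m² + 3m + 3)·α²] ∈ K_m`.
Then `Tr(ρ) = 0`, `Tr(α·ρ) = 0` and `Tr(α²·ρ) = 1`, i.e. `ρ` is the third element of
the dual basis of `{1, α, α²}` with respect to the trace form. -/
theorem dual_basis_element (m : ℤ) (hm : 4 ≤ m) (α : ℝ)
    (hroot : α ^ 3 - (m : ℝ) * α ^ 2 - ((m : ℝ) + 1) * α - 1 = 0)
    (hmax : ∀ β : ℝ, β ^ 3 - (m : ℝ) * β ^ 2 - ((m : ℝ) + 1) * β - 1 = 0 → β ≤ α)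
    [FiniteDimensional ℚ ℚ⟮α⟯]
    (ρ : ℚ⟮α⟯)
    (hρ : ρ = -(1 / (((m : ℚ⟮α⟯) ^ 2 + m - 3) ^ 2 - 32)) *
        (((m : ℚ⟮α⟯) ^ 3 + 5 * m ^ 2 + 5 * m + 4) +
          ((2 : ℚ⟮α⟯) * m ^ 3 + 7 * m ^ 2 + 7 * m + 9) * AdjoinSimple.gen ℚ α -
          2 * ((m : ℚ⟮α⟯) ^ 2 + 3 * m + 3) * AdjoinSimple.gen ℚ α ^ 2)) :
    Algebra.trace ℚ ℚ⟮α⟯ ρ = 0 ∧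
      Algebra.trace ℚ ℚ⟮α⟯ (AdjoinSimple.gen ℚ α * ρ) = 0 ∧
      Algebra.trace ℚ ℚ⟮α⟯ (AdjoinSimple.gen ℚ α ^ 2 * ρ) = 1 := by
  have hmin := minpoly_eq_cubic_aux m hm α hroot
  have hint : IsIntegral ℚ α := by
    refine ⟨Polynomial.X ^ 3 - Polynomial.C (m : ℚ) * Polynomial.X ^ 2
      - Polynomial.C ((m : ℚ) + 1) * Polynomial.X - Polynomial.C 1, by monicity!, ?_⟩
    have : Polynomial.aeval α (Polynomial.X ^ 3 - Polynomial.C (m : ℚ) * Polynomial.X ^ 2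
        - Polynomial.C ((m : ℚ) + 1) * Polynomial.X - Polynomial.C 1) = 0 := by
      simp only [map_sub, map_mul, map_pow, Polynomial.aeval_X, Polynomial.aeval_C, map_one,
        map_intCast, map_add]
      linarith [hroot]
    simpa [Polynomial.aeval_def] using this
  set θ := AdjoinSimple.gen ℚ α with hθdef
  have hθ : θ ^ 3 = (m : ℚ⟮α⟯) * θ ^ 2 + ((m : ℚ⟮α⟯) + 1) * θ + 1 := by
    have h0 := IntermediateField.aeval_gen_minpoly ℚ α
    rw [hmin] at h0
    simp only [map_sub, map_mul, map_pow, Polynomial.aeval_X, Polynomial.aeval_C, map_one,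
      map_intCast, map_add] at h0
    linear_combination h0
  set pb := IntermediateField.adjoin.powerBasis hint with hpb
  have hdim : pb.dim = 3 := by
    simp [hpb, IntermediateField.adjoin.powerBasis_dim, hmin]
    compute_degree!
  set b : Module.Basis (Fin 3) ℚ ℚ⟮α⟯ := pb.basis.reindex (finCongr hdim) with hbdef
  have hb : ∀ i : Fin 3, b i = θ ^ (i : ℕ) := by
    intro i
    rw [hbdef, Module.Basis.reindex_apply, pb.basis_eq_pow]
    simp [hpb, IntermediateField.adjoin.powerBasis_gen, hθdef]
  have hr : ∀ (c0 c1 c2 : ℚ) (i : Fin 3),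
      b.repr (c0 • b 0 + c1 • b 1 + c2 • b 2) i = ![c0, c1, c2] i := by
    intro c0 c1 c2 i
    simp only [map_add, map_smul, Module.Basis.repr_self, Finsupp.coe_add, Finsupp.coe_smul,
      Pi.add_apply, Pi.smul_apply, Finsupp.single_apply, smul_eq_mul]
    fin_cases i <;> simp
  have hb0 : (1 : ℚ⟮α⟯) = b 0 := by rw [hb 0]; simp
  have hb1 : θ = b 1 := by rw [hb 1]; simp
  have hb2 : θ ^ 2 = b 2 := by rw [hb 2]; norm_num
  have key : ∀ c0 c1 c2 : ℚ, Algebra.trace ℚ ℚ⟮α⟯ (c0 • 1 + c1 • θ + c2 • θ ^ 2)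
      = 3 * c0 + (m : ℚ) * c1 + ((m : ℚ) ^ 2 + 2 * m + 2) * c2 := by
    intro c0 c1 c2
    set x := c0 • (1 : ℚ⟮α⟯) + c1 • θ + c2 • θ ^ 2 with hx
    have m0 : x * b 0 = c0 • b 0 + c1 • b 1 + c2 • b 2 := by
      rw [← hb0, ← hb1, ← hb2, mul_one]
    have m1 : x * b 1 = c2 • b 0 + (c0 + c2 * ((m : ℚ) + 1)) • b 1
        + (c1 + c2 * (m : ℚ)) • b 2 := by
      rw [← hb0, ← hb1, ← hb2, hx]
      simp only [Rat.smul_def]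
      push_cast
      linear_combination ((c2 : ℚ⟮α⟯)) * hθ
    have m2 : x * b 2 = (c1 + c2 * (m : ℚ)) • b 0
        + (c1 * ((m : ℚ) + 1) + c2 * ((m : ℚ) ^ 2 + (m : ℚ) + 1)) • b 1
        + (c0 + c1 * (m : ℚ) + c2 * ((m : ℚ) ^ 2 + (m : ℚ) + 1)) • b 2 := by
      rw [← hb0, ← hb1, ← hb2, hx]
      simp only [Rat.smul_def]
      push_cast
      linear_combination ((c1 : ℚ⟮α⟯) + (c2 : ℚ⟮α⟯) * (θ + (m : ℚ⟮α⟯))) * hθ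
    rw [Algebra.trace_eq_matrix_trace b, Matrix.trace_fin_three]
    simp only [Algebra.leftMulMatrix_eq_repr_mul, m0, m1, m2, hr]
    simp
    ring
  -- the rational coefficient data
  set A : ℚ := (m : ℚ) ^ 3 + 5 * m ^ 2 + 5 * m + 4 with hA
  set B : ℚ := 2 * (m : ℚ) ^ 3 + 7 * m ^ 2 + 7 * m + 9 with hB
  set Cq : ℚ := 2 * ((m : ℚ) ^ 2 + 3 * m + 3) with hC
  set Dq : ℚ := ((m : ℚ) ^ 2 + (m : ℚ) - 3) ^ 2 - 32 with hD
  have h4 : (4 : ℚ) ≤ (m : ℚ) := by exact_mod_cast hm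
  have hD0 : Dq ≠ 0 := by rw [hD]; nlinarith
  set d : ℚ := -(1 / Dq) with hd
  set w : ℚ⟮α⟯ := A • 1 + B • θ + (-Cq) • θ ^ 2 with hw
  have hρw : ρ = d • w := by
    rw [hρ, hw, hd, hA, hB, hC, hD]
    simp only [Rat.smul_def]
    push_cast
    ring
  have hw1 : θ * w = (-Cq) • (1 : ℚ⟮α⟯) + (A - Cq * ((m : ℚ) + 1)) • θ
      + (B - Cq * (m : ℚ)) • θ ^ 2 := by
    rw [hw]
    simp only [Rat.smul_def]
    push_cast
    linear_combination (-(Cq : ℚ⟮α⟯)) * hθ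
  have hw2 : θ ^ 2 * w = (B - Cq * (m : ℚ)) • (1 : ℚ⟮α⟯)
      + (B * ((m : ℚ) + 1) - Cq * ((m : ℚ) ^ 2 + (m : ℚ) + 1)) • θ
      + (A + B * (m : ℚ) - Cq * ((m : ℚ) ^ 2 + (m : ℚ) + 1)) • θ ^ 2 := by
    rw [hw]
    simp only [Rat.smul_def]
    push_cast
    linear_combination ((B : ℚ⟮α⟯) + (-(Cq : ℚ⟮α⟯)) * (θ + (m : ℚ⟮α⟯))) * hθ
  refine ⟨?_, ?_, ?_⟩
  · rw [hρw, map_smul, hw, key, smul_eq_mul]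
    have : 3 * A + (m : ℚ) * B + ((m : ℚ) ^ 2 + 2 * m + 2) * (-Cq) = 0 := by
      rw [hA, hB, hC]; ring
    rw [this, mul_zero]
  · rw [hρw, mul_smul_comm, map_smul, hw1, key, smul_eq_mul]
    have : 3 * (-Cq) + (m : ℚ) * (A - Cq * ((m : ℚ) + 1))
        + ((m : ℚ) ^ 2 + 2 * m + 2) * (B - Cq * (m : ℚ)) = 0 := by
      rw [hA, hB, hC]; ring
    rw [this, mul_zero]
  · rw [hρw, mul_smul_comm, map_smul, hw2, key, smul_eq_mul]
    have : 3 * (B - Cq * (m : ℚ))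
        + (m : ℚ) * (B * ((m : ℚ) + 1) - Cq * ((m : ℚ) ^ 2 + (m : ℚ) + 1))
        + ((m : ℚ) ^ 2 + 2 * m + 2) * (A + B * (m : ℚ) - Cq * ((m : ℚ) ^ 2 + (m : ℚ) + 1))
        = -Dq := by
      rw [hA, hB, hC, hD]; ring
    rw [this, hd]
    field_simp
end

section
/- For every integer m ≥ 4 and every pair (s,t) in the set T = {(1,t) : 1 ≤ t ≤ m-1} ∪ {(s,t) : 2 ≤ s ≤ m-2, s ≤ t ≤ m} ∪ {(m-1,m)}, one has f_m(s,t) > 1, where f_m(s,t) = (-s² + (t+1)s)m² + ((t-2)s² - (t² - t)s - (t² + t))m + (s³ - 2s² - (t² - 3t - 1)s + t³ - t - 1). -/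
/-- The two-variable integer polynomial `f_m(s,t)`. -/
def fst (m s t : ℤ) : ℤ :=
  (-s ^ 2 + (t + 1) * s) * m ^ 2 +
    ((t - 2) * s ^ 2 - (t ^ 2 - t) * s - (t ^ 2 + t)) * m +
    (s ^ 3 - 2 * s ^ 2 - (t ^ 2 - 3 * t - 1) * s + t ^ 3 - t - 1)

/-- The set `T` of integer pairs associated with `m`. -/
def Tset (m : ℤ) : Set (ℤ × ℤ) :=
  {p | (p.1 = 1 ∧ 1 ≤ p.2 ∧ p.2 ≤ m - 1) ∨
    (2 ≤ p.1 ∧ p.1 ≤ m - 2 ∧ p.1 ≤ p.2 ∧ p.2 ≤ m) ∨ p = (m - 1, m)}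

/-- For every integer `m ≥ 4` and every `(s,t) ∈ T`, one has `f_m(s,t) > 1`. -/
theorem fst_gt_one (m : ℤ) (hm : 4 ≤ m) (s t : ℤ) (hst : (s, t) ∈ Tset m) :
    1 < fst m s t := by
  rcases hst with ⟨hs, ht1, ht2⟩ | ⟨hs2, hsm, hst', htm⟩ | heq
  · -- s = 1, 1 ≤ t ≤ m - 1
    simp only at hs ht1 ht2
    subst hs
    have hu : 0 ≤ t - 1 := by linarith
    have hv : 0 ≤ m - 1 - t := by linarith
    have hw : 0 ≤ (t - 1) + (m - 1 - t) - 2 := by linarith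
    have key : 0 ≤ ((t - 1) + (m - 1 - t) - 2) * (2 + (m - 1 - t)) :=
      mul_nonneg hw (by linarith)
    simp only [fst]
    nlinarith [mul_nonneg hu (mul_nonneg hv hv), mul_nonneg hu hv,
      mul_nonneg hv hv, key]
  · -- 2 ≤ s ≤ m - 2, s ≤ t ≤ m
    simp only at hs2 hsm hst' htm
    have ha : 0 ≤ s - 2 := by linarith
    have hc : 0 ≤ t - s := by linarith
    have hd : 0 ≤ m - t := by linarith
    have he : 0 ≤ (t - s) + (m - t) - 2 := by linarith
    have key : 0 ≤ ((t - s) + (m - t) - 2) *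
        (2 + (t - s) + 2 * (m - t) + (s - 2) * (m - t)) := by
      apply mul_nonneg he
      nlinarith [mul_nonneg ha hd]
    simp only [fst]
    nlinarith [key, mul_nonneg ha hc, mul_nonneg ha hd, mul_nonneg hc hd,
      mul_nonneg (mul_nonneg ha hc) hd, mul_nonneg (mul_nonneg ha hc) hc,
      mul_nonneg (mul_nonneg hc hc) hd, mul_nonneg (mul_nonneg hc hd) hd,
      mul_nonneg (mul_nonneg ha hd) hd, mul_nonneg hc hc,
      mul_nonneg (mul_nonneg (mul_nonneg ha hc) hc) hd,
      mul_nonneg (mul_nonneg (mul_nonneg ha hc) hd) hd,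
      mul_nonneg (mul_nonneg (mul_nonneg ha ha) hc) hd]
  · -- (s, t) = (m - 1, m)
    have hs : s = m - 1 := by simpa using congrArg Prod.fst heq
    have ht : t = m := by simpa using congrArg Prod.snd heq
    rw [hs, ht]
    have : fst m (m - 1) m = 2 * m - 5 := by simp only [fst]; ring
    rw [this]; linarith
end
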